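/- If k is a random variable following the binomial distribution B(K-1, α) with K ≥ 1 and 0 < α ≤ 1, then E[(1/(k+1))^3] ≤ 6/(K^3 · α^3). -/

import Mathlib

theorem binomial_expect_inv_succ_cube_le (K : ℕ) (hK : 1 ≤ K) (α : ℝ)
    (hα : 0 < α) (hα1 : α ≤ 1) :
    ∑ j ∈ Finset.range K,
        (1 / ((j : ℝ) + 1)) ^ 3 * ((K - 1).choose j : ℝ) * α ^ j * (1 - α) ^ (K - 1 - j)
      ≤ 6 / ((K : ℝ) ^ 3 * α ^ 3) := by
  obtain ⟨n, rfl⟩ : ∃ n, K = n + 1 := ⟨K - 1, (Nat.succ_pred_eq_of_pos hK).symm⟩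
  simp only [Nat.add_sub_cancel]
  have h1α : (0:ℝ) ≤ 1 - α := by linarith
  set D : ℝ := ((n:ℝ)+1)*((n:ℝ)+2)*((n:ℝ)+3) with hD
  have hDpos : 0 < D := by positivity
  set g : ℕ → ℝ := fun i => (((n+3).choose i : ℝ) * α ^ i * (1 - α) ^ ((n+3) - i)) with hg
  have hgnonneg : ∀ i, 0 ≤ g i := by
    intro i; dsimp [g]; positivity
  have hstep : ∀ j ∈ Finset.range (n+1),
      (1 / ((j : ℝ) + 1)) ^ 3 * (n.choose j : ℝ) * α ^ j * (1 - α) ^ (n - j)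
        ≤ 6 / (D * α^3) * g (j+3) := by
    intro j hj
    have key : (n.choose j : ℝ) * D = (((n+3).choose (j+3) : ℝ)) * (((j:ℝ)+1)*((j:ℝ)+2)*((j:ℝ)+3)) := by
      have h1 := Nat.add_one_mul_choose_eq n j
      have h2 := Nat.add_one_mul_choose_eq (n+1) (j+1)
      have h3 := Nat.add_one_mul_choose_eq (n+2) (j+2)
      have h1' : ((n:ℝ)+1) * (n.choose j : ℝ) = ((n+1).choose (j+1) : ℝ) * ((j:ℝ)+1) := by
        exact_mod_cast h1
      have h2' : ((n:ℝ)+2) * ((n+1).choose (j+1) : ℝ) = ((n+2).choose (j+2) : ℝ) * ((j:ℝ)+2) := by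
        exact_mod_cast h2
      have h3' : ((n:ℝ)+3) * ((n+2).choose (j+2) : ℝ) = ((n+3).choose (j+3) : ℝ) * ((j:ℝ)+3) := by
        exact_mod_cast h3
      rw [hD]
      linear_combination (((n:ℝ)+2)*((n:ℝ)+3)) * h1' + (((j:ℝ)+1)*((n:ℝ)+3)) * h2' + (((j:ℝ)+1)*((j:ℝ)+2)) * h3'
    have hc2 : (0:ℝ) ≤ ((n+3).choose (j+3) : ℝ) := by positivity
    have hj1 : (0:ℝ) ≤ (j:ℝ) := Nat.cast_nonneg j
    have hratio : (n.choose j : ℝ) / ((j:ℝ)+1)^3 ≤ 6 * ((n+3).choose (j+3) : ℝ) / D := by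
      rw [div_le_div_iff₀ (by positivity) hDpos]
      calc (n.choose j : ℝ) * D = (((n+3).choose (j+3) : ℝ)) * (((j:ℝ)+1)*((j:ℝ)+2)*((j:ℝ)+3)) := key
        _ ≤ 6 * ((n+3).choose (j+3) : ℝ) * ((j:ℝ)+1)^3 := by
            nlinarith [mul_nonneg (mul_nonneg hc2 (by linarith : (0:ℝ) ≤ (j:ℝ)+1)) (by nlinarith : (0:ℝ) ≤ 5*(j:ℝ)^2 + 7*(j:ℝ))]
    have hns : (n+3) - (j+3) = n - j := by omega
    dsimp [g]
    rw [hns]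
    have hαj : α ^ (j+3) = α ^ j * α ^ 3 := by ring
    rw [hαj]
    have hmul : 0 ≤ α ^ j * (1-α) ^ (n-j) := by positivity
    calc (1 / ((j : ℝ) + 1)) ^ 3 * (n.choose j : ℝ) * α ^ j * (1 - α) ^ (n - j)
        = ((n.choose j : ℝ) / ((j:ℝ)+1)^3) * (α ^ j * (1-α) ^ (n-j)) := by
          rw [div_pow, one_pow]; ring
      _ ≤ (6 * ((n+3).choose (j+3) : ℝ) / D) * (α ^ j * (1-α) ^ (n-j)) := by
          exact mul_le_mul_of_nonneg_right hratio hmul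
      _ = 6 / (D * α^3) * (((n+3).choose (j+3) : ℝ) * (α ^ j * α ^ 3) * (1 - α) ^ (n - j)) := by
          field_simp
  have hfull : ∑ i ∈ Finset.range (n+4), g i = 1 := by
    have h := (add_pow α (1-α) (n+3)).symm
    calc ∑ i ∈ Finset.range (n+4), g i
        = ∑ i ∈ Finset.range ((n+3)+1), α^i * (1-α)^((n+3)-i) * ((n+3).choose i : ℝ) := by
          apply Finset.sum_congr rfl
          intro i _; dsimp [g]; ring
      _ = (α + (1-α))^(n+3) := h
      _ = 1 := by norm_num
  have hB : ∑ j ∈ Finset.range (n+1), g (j+3) ≤ 1 := by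
    rw [← hfull]
    have himg : ∑ j ∈ Finset.range (n+1), g (j+3) = ∑ i ∈ (Finset.range (n+1)).image (· + 3), g i :=
      (Finset.sum_image (fun a _ b _ h => by omega)).symm
    rw [himg]
    apply Finset.sum_le_sum_of_subset_of_nonneg
    · intro i hi; simp at hi ⊢; omega
    · intro i _ _; exact hgnonneg i
  calc ∑ j ∈ Finset.range (n+1),
        (1 / ((j : ℝ) + 1)) ^ 3 * (n.choose j : ℝ) * α ^ j * (1 - α) ^ (n - j)
      ≤ ∑ j ∈ Finset.range (n+1), 6 / (D * α^3) * g (j+3) := Finset.sum_le_sum hstep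
    _ = 6 / (D * α^3) * ∑ j ∈ Finset.range (n+1), g (j+3) := (Finset.mul_sum _ _ _).symm
    _ ≤ 6 / (D * α^3) * 1 := mul_le_mul_of_nonneg_left hB (by positivity)
    _ ≤ 6 / (((n+1 : ℕ) : ℝ)^3 * α^3) := by
        rw [mul_one]
        push_cast
        gcongr
        · nlinarith [Nat.cast_nonneg (α := ℝ) n]
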